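/- arXiv:0912.4783 — 2 statements merged into one kernel-verified Lean document; each statement's English description precedes it below -/
import Mathlib

section
/- Suppose the two end states and the speed s satisfy the Rankine–Hugoniot conditions with s ≠ 0 and v₊ ≠ v₋. Then the shock speed satisfies s² = γRθ₋(1−d₁)/(v₊v₋), where d = v₊−v₋, d₂ = (γ−1)d/(2v₊), and d₁ = d₂/(1+d₂). -/
/- STATEMENT 0: Under the Rankine–Hugoniot conditions for a perfect gas, with s ≠ 0 and
v₊ ≠ v₋, the shock speed satisfies s² = γRθ₋(1−d₁)/(v₊v₋), where d = v₊−v₋,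
d₂ = (γ−1)d/(2v₊), d₁ = d₂/(1+d₂). -/

theorem shock_speed_formula
    (γ R vm vp θm θp um up s : ℝ)
    (hγ : 1 < γ) (hR : 0 < R)
    (hvm : 0 < vm) (hvp : 0 < vp) (hθm : 0 < θm) (hθp : 0 < θp)
    (hs : s ≠ 0) (hv : vp ≠ vm)
    (RH1 : -s * (vp - vm) - (up - um) = 0)
    (RH2 : -s * (up - um) + (R * θp / vp - R * θm / vm) = 0)
    (RH3 : -s * ((R * θp / (γ - 1) + up ^ 2 / 2) - (R * θm / (γ - 1) + um ^ 2 / 2))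
            + (R * θp / vp * up - R * θm / vm * um) = 0) :
    s ^ 2 = γ * R * θm *
        (1 - ((γ - 1) * (vp - vm) / (2 * vp)) / (1 + (γ - 1) * (vp - vm) / (2 * vp)))
        / (vp * vm) := by
  have hd : vp - vm ≠ 0 := sub_ne_zero.mpr hv
  have hvp' : vp ≠ 0 := ne_of_gt hvp
  have hvm' : vm ≠ 0 := ne_of_gt hvm
  have hγ1 : γ - 1 ≠ 0 := ne_of_gt (by linarith)
  have hR' : R ≠ 0 := ne_of_gt hR
  -- momentum relation with velocity eliminated
  have eqA : s ^ 2 * (vp - vm) + (R * θp / vp - R * θm / vm) = 0 := by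
    linear_combination RH2 - s * RH1
  have eqA2 : s ^ 2 * (vp - vm) * vp * vm + R * θp * vm - R * θm * vp = 0 := by
    have := eqA
    field_simp at this
    linarith
  -- Hugoniot relation
  have hB' : -s * (R * θp / (γ - 1) - R * θm / (γ - 1)
      + (R * θp / vp + R * θm / vm) * (vp - vm) / 2) = 0 := by
    linear_combination RH3 - ((up + um) / 2) * RH2 + ((R * θp / vp + R * θm / vm) / 2) * RH1
  have hB : R * θp / (γ - 1) - R * θm / (γ - 1)
      + (R * θp / vp + R * θm / vm) * (vp - vm) / 2 = 0 :=
    (mul_eq_zero.mp hB').resolve_left (neg_ne_zero.mpr hs)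
  have hB2 : θp * vm * (2 * vp + (γ - 1) * (vp - vm))
      = θm * vp * (2 * vm - (γ - 1) * (vp - vm)) := by
    field_simp at hB
    nlinarith [hB]
  have hA : 0 < 2 * vp + (γ - 1) * (vp - vm) := by
    by_contra h
    push_neg at h
    have hBq : 0 < 2 * vm - (γ - 1) * (vp - vm) := by linarith
    nlinarith [mul_pos hθp hvm, mul_pos (mul_pos hθm hvp) hBq]
  have hA' : 2 * vp + (γ - 1) * (vp - vm) ≠ 0 := ne_of_gt hA
  have key : (s ^ 2 * vp * vm * (2 * vp + (γ - 1) * (vp - vm)) - 2 * γ * R * θm * vp)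
      * (vp - vm) = 0 := by
    linear_combination (2 * vp + (γ - 1) * (vp - vm)) * eqA2 - R * hB2
  have key2 : s ^ 2 * vp * vm * (2 * vp + (γ - 1) * (vp - vm)) = 2 * γ * R * θm * vp := by
    have := (mul_eq_zero.mp key).resolve_right hd
    linarith
  have hsimp : 1 + (γ - 1) * (vp - vm) / (2 * vp)
      = (2 * vp + (γ - 1) * (vp - vm)) / (2 * vp) := by
    field_simp
  have hfrac : 1 - (γ - 1) * (vp - vm) / (2 * vp) / (1 + (γ - 1) * (vp - vm) / (2 * vp))
      = 2 * vp / (2 * vp + (γ - 1) * (vp - vm)) := by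
    rw [hsimp]
    rw [div_div_div_cancel_right₀ (by positivity : (2 * vp) ≠ 0), eq_div_iff hA', sub_mul,
      div_mul_cancel₀ _ hA']
    ring
  rw [hfrac]
  field_simp
  apply mul_left_cancel₀ hvp'
  linear_combination key2
end

section
/- Let s>0, β∈ℝ, and let U:ℝ→ℝ be differentiable with U′ integrable on ℝ, U(ξ)→u₋ as ξ→−∞ and U(ξ)→u₊ as ξ→+∞, with U−u₊ integrable on (0,∞) and U−u₋ integrable on (−∞,0), and let u₀:(0,∞)→ℝ be such that u₀−U(·−β) is integrable on (0,∞). Define I(a) = ∫₀^∞[u₀(x)−U(x+a−β)]dx − s∫₀^∞(U(−st+a−β)−u₋)dt. Then I(a) is finite for every a∈ℝ, I is differentiable with I′(a) = u₋−u₊ for all a, hence I(a) = I(0) + (u₋−u₊)a; in particular, if u₊≠u₋, then α := I(0)/(u₊−u₋) is the unique real number with I(α)=0. -/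
open Filter Set MeasureTheory

noncomputable section

/-- Translation invariance of integrability on `Ioi`. -/
lemma integrableOn_shift_iff (f : ℝ → ℝ) (c : ℝ) :
    IntegrableOn (fun x => f (x + c)) (Ioi (0:ℝ)) ↔ IntegrableOn f (Ioi c) := by
  have h2 : MeasurableEmbedding (fun x : ℝ => x + c) :=
    (Homeomorph.addRight c).measurableEmbedding
  have h1 : MeasurePreserving (fun x : ℝ => x + c)
      (volume : Measure ℝ) (volume : Measure ℝ) := measurePreserving_add_right volume c
  have h := h1.integrableOn_comp_preimage h2 (f := f) (s := Ioi c)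
  have hpre : (fun x : ℝ => x + c) ⁻¹' Ioi c = Ioi 0 := by
    ext x; simp
  rw [hpre] at h
  exact h

/-- Translation invariance of the integral on `Ioi`. -/
lemma integral_shift (f : ℝ → ℝ) (c : ℝ) :
    ∫ x in Ioi (0:ℝ), f (x + c) = ∫ x in Ioi c, f x := by
  have h1 : MeasurePreserving (fun x : ℝ => x + c)
      (volume : Measure ℝ) (volume : Measure ℝ) := measurePreserving_add_right volume c
  have h := h1.setIntegral_preimage_emb (Homeomorph.addRight c).measurableEmbedding f (Ioi c)
  have hpre : (fun x : ℝ => x + c) ⁻¹' Ioi c = Ioi 0 := by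
    ext x; simp
  rwa [hpre] at h

/-- Reflection invariance of integrability. -/
lemma integrableOn_refl_iff (f : ℝ → ℝ) (c : ℝ) :
    IntegrableOn (fun x => f (c - x)) (Ioi (0:ℝ)) ↔ IntegrableOn f (Iio c) := by
  have h2 : MeasurableEmbedding (fun x : ℝ => c - x) :=
    (Homeomorph.subLeft c).measurableEmbedding
  have h1 : MeasurePreserving (fun x : ℝ => c - x)
      (volume : Measure ℝ) (volume : Measure ℝ) := Measure.measurePreserving_sub_left volume c
  have h := h1.integrableOn_comp_preimage h2 (f := f) (s := Iio c)
  have hpre : (fun x : ℝ => c - x) ⁻¹' Iio c = Ioi 0 := by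
    ext x; simp
  rw [hpre] at h
  exact h

/-- Reflection invariance of the integral. -/
lemma integral_refl (f : ℝ → ℝ) (c : ℝ) :
    ∫ x in Ioi (0:ℝ), f (c - x) = ∫ x in Iio c, f x := by
  have h1 : MeasurePreserving (fun x : ℝ => c - x)
      (volume : Measure ℝ) (volume : Measure ℝ) := Measure.measurePreserving_sub_left volume c
  have h := h1.setIntegral_preimage_emb (Homeomorph.subLeft c).measurableEmbedding f (Iio c)
  have hpre : (fun x : ℝ => c - x) ⁻¹' Iio c = Ioi 0 := by
    ext x; simp
  rwa [hpre] at h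

/-- Difference of tail integrals is an interval integral. -/
lemma integral_Ioi_sub (f : ℝ → ℝ) (hf : ∀ c : ℝ, IntegrableOn f (Ioi c)) (y z : ℝ) :
    (∫ x in Ioi y, f x) - ∫ x in Ioi z, f x = ∫ x in y..z, f x := by
  have key : ∀ y z : ℝ, y ≤ z →
      (∫ x in Ioi y, f x) - ∫ x in Ioi z, f x = ∫ x in y..z, f x := by
    intro y z h
    rw [intervalIntegral.integral_of_le h]
    have hu : Ioc y z ∪ Ioi z = Ioi y := Ioc_union_Ioi_eq_Ioi h
    have hd : Disjoint (Ioc y z) (Ioi z) := Ioc_disjoint_Ioi le_rfl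
    have hsplit : ∫ x in Ioi y, f x = (∫ x in Ioc y z, f x) + ∫ x in Ioi z, f x := by
      rw [← hu]
      exact setIntegral_union hd measurableSet_Ioi
        ((hf y).mono_set Ioc_subset_Ioi_self) (hf z)
    rw [hsplit]; ring
  rcases le_total y z with h | h
  · exact key y z h
  · have := key z y h
    rw [intervalIntegral.integral_symm]
    linarith

/-- Difference of head integrals is an interval integral. -/
lemma integral_Iio_sub (f : ℝ → ℝ) (hf : ∀ c : ℝ, IntegrableOn f (Iio c)) (y z : ℝ) :
    (∫ x in Iio z, f x) - ∫ x in Iio y, f x = ∫ x in y..z, f x := by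
  have key : ∀ y z : ℝ, y ≤ z →
      (∫ x in Iio z, f x) - ∫ x in Iio y, f x = ∫ x in y..z, f x := by
    intro y z h
    rw [intervalIntegral.integral_of_le h]
    have hu : Iio y ∪ Ico y z = Iio z := Iio_union_Ico_eq_Iio h
    have hd : Disjoint (Iio y) (Ico y z) :=
      (Iio_disjoint_Ici le_rfl).mono_right Ico_subset_Ici_self
    have hsplit : ∫ x in Iio z, f x = (∫ x in Iio y, f x) + ∫ x in Ico y z, f x := by
      rw [← hu]
      exact setIntegral_union hd measurableSet_Ico (hf y)
        ((hf z).mono_set Ico_subset_Iio_self)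
    rw [hsplit, integral_Ico_eq_integral_Ioo, integral_Ioc_eq_integral_Ioo]
    ring
  rcases le_total y z with h | h
  · exact key y z h
  · have := key z y h
    rw [intervalIntegral.integral_symm]
    linarith

/- STATEMENT 4: properties of the shift functional
I(a) = ∫₀^∞[u₀(x)−U(x+a−β)]dx − s∫₀^∞(U(−st+a−β)−u₋)dt. -/
theorem shift_functional_properties
    (s β um up : ℝ) (U u₀ : ℝ → ℝ) (I : ℝ → ℝ)
    (hs : 0 < s)
    (hUdiff : Differentiable ℝ U)
    (hU'int : Integrable (deriv U))
    (hUbot : Tendsto U atBot (nhds um))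
    (hUtop : Tendsto U atTop (nhds up))
    (hUp : IntegrableOn (fun ξ => U ξ - up) (Ioi 0))
    (hUm : IntegrableOn (fun ξ => U ξ - um) (Iio 0))
    (hu₀ : IntegrableOn (fun x => u₀ x - U (x - β)) (Ioi 0))
    (hI : I = fun a => (∫ x in Ioi (0:ℝ), (u₀ x - U (x + a - β)))
        - s * ∫ t in Ioi (0:ℝ), (U (-s * t + a - β) - um)) :
    -- I(a) is finite for every a (both integrals converge absolutely)
    (∀ a : ℝ, IntegrableOn (fun x => u₀ x - U (x + a - β)) (Ioi 0) ∧
        IntegrableOn (fun t => U (-s * t + a - β) - um) (Ioi 0)) ∧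
    -- I is differentiable with I′(a) = u₋ − u₊
    (∀ a : ℝ, HasDerivAt I (um - up) a) ∧
    -- hence I(a) = I(0) + (u₋−u₊)a
    (∀ a : ℝ, I a = I 0 + (um - up) * a) ∧
    -- if u₊ ≠ u₋ then α := I(0)/(u₊−u₋) is the unique zero of I
    (up ≠ um → I (I 0 / (up - um)) = 0 ∧ ∀ a : ℝ, I a = 0 → a = I 0 / (up - um)) := by
  have cU : Continuous U := hUdiff.continuous
  -- integrability of the tails of U
  have hA0 : ∀ c : ℝ, IntegrableOn (fun ξ => U ξ - up) (Ioi c) := by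
    intro c
    have hsub : Ioi c ⊆ Ioc c 0 ∪ Ioi 0 := by
      intro x hx
      rcases le_or_gt x 0 with h | h
      · exact Or.inl ⟨hx, h⟩
      · exact Or.inr h
    exact (((cU.sub continuous_const).integrableOn_Ioc).union hUp).mono_set hsub
  have hB0 : ∀ c : ℝ, IntegrableOn (fun ξ => U ξ - um) (Iio c) := by
    intro c
    have hsub : Iio c ⊆ Iio 0 ∪ Ico 0 c := by
      intro x hx
      rcases lt_or_ge x 0 with h | h
      · exact Or.inl h
      · exact Or.inr ⟨h, hx⟩
    exact (hUm.union (((cU.sub continuous_const).integrableOn_Icc).mono_set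
      Ico_subset_Icc_self)).mono_set hsub
  have key1 : ∀ c : ℝ, IntegrableOn (fun x => U (x + c) - up) (Ioi (0:ℝ)) :=
    fun c => (integrableOn_shift_iff (fun ξ => U ξ - up) c).mpr (hA0 c)
  have key2 : ∀ c : ℝ, IntegrableOn (fun t => U (c - s * t) - um) (Ioi (0:ℝ)) := by
    intro c
    have h1 : IntegrableOn (fun y => U (c - y) - um) (Ioi (0:ℝ)) :=
      (integrableOn_refl_iff (fun ξ => U ξ - um) c).mpr (hB0 c)
    have h2 := (integrableOn_Ioi_comp_mul_left_iff (fun y => U (c - y) - um) 0 hs).mpr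
      (by rwa [mul_zero])
    exact h2
  -- rewrite the integrand of the first integral
  have hfun1 : ∀ a : ℝ, (fun x => u₀ x - U (x + a - β)) =
      (fun x => (u₀ x - U (x - β)) + ((U (x + -β) - up) - (U (x + (a - β)) - up))) := by
    intro a
    funext x
    have h1 : x + -β = x - β := by ring
    have h2 : x + (a - β) = x + a - β := by ring
    rw [h1, h2]; ring
  have hfun2 : ∀ a : ℝ, (fun t => U (-s * t + a - β) - um) =
      (fun t => U ((a - β) - s * t) - um) := by
    intro a
    funext t
    have h1 : -s * t + a - β = (a - β) - s * t := by ring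
    rw [h1]
  -- Part 1 : integrability
  have part1 : ∀ a : ℝ, IntegrableOn (fun x => u₀ x - U (x + a - β)) (Ioi 0) ∧
      IntegrableOn (fun t => U (-s * t + a - β) - um) (Ioi 0) := by
    intro a
    constructor
    · rw [hfun1 a]
      exact hu₀.add ((key1 (-β)).sub (key1 (a - β)))
    · rw [hfun2 a]
      exact key2 (a - β)
  -- explicit formula for I
  have hIa : ∀ a : ℝ, I a = (∫ x in Ioi (0:ℝ), (u₀ x - U (x - β)))
      + (∫ ξ in Ioi (-β:ℝ), (U ξ - up)) - (∫ ξ in Ioi (a - β), (U ξ - up))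
      - (∫ ξ in Iio (a - β), (U ξ - um)) := by
    intro a
    simp only [hI]
    have hg : IntegrableOn (fun x => (U (x + -β) - up) - (U (x + (a - β)) - up))
        (Ioi (0:ℝ)) := (key1 (-β)).sub (key1 (a - β))
    rw [hfun1 a, hfun2 a,
      integral_add hu₀ hg,
      integral_sub (key1 (-β)) (key1 (a - β))]
    have e1 : ∫ x in Ioi (0:ℝ), (U (x + -β) - up) = ∫ ξ in Ioi (-β:ℝ), (U ξ - up) :=
      integral_shift (fun ξ => U ξ - up) (-β)
    have e1' : ∫ x in Ioi (0:ℝ), (U (x + (a - β)) - up) = ∫ ξ in Ioi (a - β), (U ξ - up) :=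
      integral_shift (fun ξ => U ξ - up) (a - β)
    have e2 : ∫ t in Ioi (0:ℝ), (U ((a - β) - s * t) - um)
        = s⁻¹ * ∫ ξ in Iio (a - β), (U ξ - um) := by
      have h3 := integral_comp_mul_left_Ioi (fun y => U ((a - β) - y) - um) 0 hs
      rw [mul_zero] at h3
      rw [h3, smul_eq_mul, integral_refl (fun ξ => U ξ - um) (a - β)]
    rw [e1, e1', e2, ← mul_assoc, mul_inv_cancel₀ hs.ne', one_mul]
    ring
  -- Part 3 : affine formula
  have claim3 : ∀ a : ℝ, I a = I 0 + (um - up) * a := by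
    intro a
    have h0 : (0:ℝ) - β = -β := by ring
    have hA := hIa a
    have hB := hIa 0
    rw [h0] at hB
    have d1 := integral_Ioi_sub (fun ξ => U ξ - up) hA0 (-β) (a - β)
    have d2 := integral_Iio_sub (fun ξ => U ξ - um) hB0 (-β) (a - β)
    have d3 : (∫ r in (-β)..(a - β), (U r - up)) - (∫ r in (-β)..(a - β), (U r - um))
        = (um - up) * a := by
      rw [← intervalIntegral.integral_sub (f := fun r => U r - up) (g := fun r => U r - um)
        ((cU.sub continuous_const).intervalIntegrable _ _)
        ((cU.sub continuous_const).intervalIntegrable _ _)]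
      have h4 : ∀ r : ℝ, (U r - up) - (U r - um) = um - up := fun r => by ring
      simp only [h4]
      rw [intervalIntegral.integral_const, smul_eq_mul]
      ring
    rw [hA, hB]
    linarith
  -- Part 2 : differentiability
  have part2 : ∀ a : ℝ, HasDerivAt I (um - up) a := by
    intro a
    have h : HasDerivAt (fun x : ℝ => I 0 + (um - up) * x) (um - up) a := by
      simpa using ((hasDerivAt_id a).const_mul (um - up)).const_add (I 0)
    exact h.congr_of_eventuallyEq (Filter.Eventually.of_forall claim3)
  refine ⟨part1, part2, claim3, ?_⟩
  -- Part 4 : unique zero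
  intro h
  have hne : up - um ≠ 0 := sub_ne_zero.mpr h
  constructor
  · rw [claim3]
    field_simp
    ring
  · intro a ha
    have h1 := claim3 a
    rw [ha] at h1
    have h2 : (up - um) * a = I 0 := by linarith [h1]
    field_simp
    linarith [h2]
end
end
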